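/- Let d ≥ 1 and let W_d be the d×d matrix over the shuffle algebra T(ℝ^d) whose (i,j) entry is the two-letter word ij. Then det_⧢(W_d) = Σ_{σ∈S_d} sign(σ) Σ_{τ∈S_d} τ(1)σ(τ(1)) · τ(2)σ(τ(2)) ⋯ τ(d)σ(τ(d)), where each summand on the right is the word of length 2d obtained by concatenating the two-letter blocks τ(i)σ(τ(i)) for i = 1,…,d. -/

import Mathlib

open scoped BigOperators

namespace ShufflePaper

variable {α : Type*}

/-- All shuffles (interleavings) of two words, with multiplicity. -/
def shuffles : List α → List α → Multiset (List α)
  | [], ys => {ys}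
  | x :: xs, [] => {x :: xs}
  | x :: xs, y :: ys =>
      ((shuffles xs (y :: ys)).map (x :: ·)) + ((shuffles (x :: xs) ys).map (y :: ·))
  termination_by l₁ l₂ => l₁.length + l₂.length

/-- The element of the shuffle algebra corresponding to a multiset of words. -/
noncomputable def ofMS (m : Multiset (List α)) : List α →₀ ℝ :=
  (m.map fun l => Finsupp.single l (1 : ℝ)).sum

/-- The shuffle product on the shuffle algebra `T(ℝ^d)` (bilinear extension). -/
noncomputable def sh (x y : List α →₀ ℝ) : List α →₀ ℝ :=
  x.sum fun v a => y.sum fun w b => (a * b) • ofMS (shuffles v w)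

/-- Iterated shuffle product of a list of elements (empty word is the unit). -/
noncomputable def shProd : List (List α →₀ ℝ) → (List α →₀ ℝ)
  | [] => Finsupp.single [] 1
  | x :: xs => sh x (shProd xs)

/-- Determinant in the commutative ring `(T(ℝ^d), ⧢)` via the Leibniz formula. -/
noncomputable def detSh {n : ℕ} (M : Fin n → Fin n → (List α →₀ ℝ)) : List α →₀ ℝ :=
  ∑ σ : Equiv.Perm (Fin n), (Equiv.Perm.sign σ : ℤ) •
    shProd ((List.finRange n).map fun i => M (σ i) i)

/-- The matrix `W_d` whose `(i,j)` entry is the two-letter word `ij`. -/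
noncomputable def W (d : ℕ) : Fin d → Fin d → (List (Fin d) →₀ ℝ) :=
  fun i j => Finsupp.single [i, j] 1

/-- `inv(t_{1,d}) = Σ_σ sign(σ) σ(1)⋯σ(d)`. -/
noncomputable def invT1 (d : ℕ) : List (Fin d) →₀ ℝ :=
  ∑ σ : Equiv.Perm (Fin d), (Equiv.Perm.sign σ : ℤ) •
    Finsupp.single ((List.finRange d).map σ) 1

/-- `inv(t_{2,d}) = Σ_{σ,τ} sign(σ)sign(τ) σ(1)τ(1)⋯σ(d)τ(d)`. -/
noncomputable def invT2 (d : ℕ) : List (Fin d) →₀ ℝ :=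
  ∑ σ : Equiv.Perm (Fin d), ∑ τ : Equiv.Perm (Fin d),
    ((Equiv.Perm.sign σ : ℤ) * (Equiv.Perm.sign τ : ℤ)) •
      Finsupp.single ((List.finRange d).flatMap fun i => [σ i, τ i]) 1

/- Right half-shuffle of two words: `u ≻ (v·i) = (u ⧢ v)·i`; zero if the
second word is empty. -/
open Classical in
noncomputable def hsW (u w : List α) : List α →₀ ℝ :=
  if h : w = [] then 0
  else ofMS ((shuffles u w.dropLast).map fun l => l ++ [w.getLast h])

/-- Right half-shuffle product (bilinear extension). -/
noncomputable def hs (x y : List α →₀ ℝ) : List α →₀ ℝ :=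
  x.sum fun v a => y.sum fun w b => (a * b) • hsW v w

/-- Iterated right half-shuffle of a list of words, bracketed from the left. -/
noncomputable def hsList : List (List α) → (List α →₀ ℝ)
  | [] => 0
  | w :: ws => ws.foldl (fun acc u => hs acc (Finsupp.single u 1)) (Finsupp.single w 1)

/-- Action of `σ ∈ S_n` on the span of words, permuting letter positions of
words of length `n` (letter in position `σ(k)` of `σ·w` is `w_k`); words of
other lengths are left untouched. -/
noncomputable def permAct {d : ℕ} (n : ℕ) (σ : Equiv.Perm (Fin n))
    (x : List (Fin d) →₀ ℝ) : List (Fin d) →₀ ℝ :=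
  x.sum fun w a =>
    if h : w.length = n then
      Finsupp.single (List.ofFn fun p : Fin n => w.get (Fin.cast h.symm (σ⁻¹ p))) a
    else Finsupp.single w a

/-- The subgroup `H ≤ S_{2d}` generated by the transpositions `(2i−1, 2i+1)` and
`(2i, 2i+2)`, `1 ≤ i ≤ d−1` (0-indexed: all swaps `(k, k+2)` with `k+2 < 2d`). -/
def Hgrp (d : ℕ) : Subgroup (Equiv.Perm (Fin (2 * d))) :=
  Subgroup.closure
    {g | ∃ k : ℕ, ∃ hk : k + 2 < 2 * d, g = Equiv.swap ⟨k, by omega⟩ ⟨k + 2, hk⟩}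

/-- Pfaffian in the shuffle algebra, via the sum over permutations. -/
noncomputable def pfSh {n : ℕ} (A : Fin n → Fin n → (List α →₀ ℝ)) : List α →₀ ℝ :=
  ((2 ^ (n / 2) * (n / 2).factorial : ℝ))⁻¹ •
    ∑ π : Equiv.Perm (Fin n), (Equiv.Perm.sign π : ℤ) •
      shProd ((List.finRange (n / 2)).map fun i : Fin (n / 2) =>
        A (π ⟨2 * (i : ℕ), by have := i.isLt; omega⟩)
          (π ⟨2 * (i : ℕ) + 1, by have := i.isLt; omega⟩))

/-- The matrix `Z_d` from de Bruijn's formula, odd case. -/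
noncomputable def Z (d : ℕ) : Fin (d + 1) → Fin (d + 1) → (List (Fin d) →₀ ℝ) :=
  fun i j =>
    if hi : (i : ℕ) < d then
      if hj : (j : ℕ) < d then
        Finsupp.single [⟨i, hi⟩, ⟨j, hj⟩] 1 - Finsupp.single [⟨j, hj⟩, ⟨i, hi⟩] 1
      else Finsupp.single [⟨i, hi⟩] 1
    else if hj : (j : ℕ) < d then -Finsupp.single [⟨j, hj⟩] 1
    else 0


lemma ofMS_zero : ofMS (0 : Multiset (List α)) = 0 := by simp [ofMS]

lemma ofMS_add (m n : Multiset (List α)) : ofMS (m + n) = ofMS m + ofMS n := by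
  simp [ofMS]

lemma ofMS_cons (w : List α) (m : Multiset (List α)) :
    ofMS (w ::ₘ m) = Finsupp.single w 1 + ofMS m := by simp [ofMS]

lemma ofMS_singleton (w : List α) : ofMS ({w} : Multiset (List α)) = Finsupp.single w 1 := by
  simp [ofMS]

lemma sh_single_left (v : List α) (y : List α →₀ ℝ) :
    sh (Finsupp.single v 1) y = y.sum fun w b => b • ofMS (shuffles v w) := by
  unfold sh
  rw [Finsupp.sum_single_index] <;> simp [Finsupp.sum]

lemma sh_single_ofMS (v : List α) (m : Multiset (List α)) :
    sh (Finsupp.single v 1) (ofMS m) = ofMS (m.bind (shuffles v)) := by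
  induction m using Multiset.induction_on with
  | empty => simp [sh_single_left, ofMS_zero]
  | cons w m ih =>
      rw [ofMS_cons, Multiset.cons_bind, ofMS_add, ← ih, sh_single_left, sh_single_left,
        Finsupp.sum_add_index' (by simp) (by intros; rw [add_smul])]
      rw [Finsupp.sum_single_index (by simp), one_smul]

def mshuffleList : List (List α) → Multiset (List α)
  | [] => {[]}
  | w :: ws => (mshuffleList ws).bind (shuffles w)

lemma shProd_singles (L : List (List α)) :
    shProd (L.map fun w => Finsupp.single w 1) = ofMS (mshuffleList L) := by
  induction L with
  | nil => simp [shProd, mshuffleList, ofMS_singleton]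
  | cons w ws ih => simp [shProd, mshuffleList, ih, sh_single_ofMS]



lemma shuffles_nil_left (v : List α) : shuffles [] v = {v} := by rw [shuffles]

lemma shuffles_nil_right (v : List α) : shuffles v [] = {v} := by
  cases v <;> rw [shuffles]

lemma shuffles_spec [DecidableEq α] (u v : List α) (h : (u ++ v).Nodup) :
    (shuffles u v).Nodup ∧
      ∀ w, w ∈ shuffles u v ↔ (w.Perm (u ++ v) ∧ u.Sublist w ∧ v.Sublist w) := by
  induction u, v using shuffles.induct with
  | case1 ys =>
      rw [shuffles_nil_left]
      refine ⟨Multiset.nodup_singleton _, fun w => ?_⟩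
      simp only [Multiset.mem_singleton, List.nil_append]
      constructor
      · rintro rfl; exact ⟨List.Perm.refl _, List.nil_sublist _, List.Sublist.refl _⟩
      · rintro ⟨hp, -, hs⟩; exact (hs.eq_of_length hp.length_eq.symm).symm
  | case2 x xs =>
      rw [shuffles_nil_right]
      refine ⟨Multiset.nodup_singleton _, fun w => ?_⟩
      simp only [Multiset.mem_singleton, List.append_nil]
      constructor
      · rintro rfl; exact ⟨List.Perm.refl _, List.Sublist.refl _, List.nil_sublist _⟩
      · rintro ⟨hp, hs, -⟩; exact (hs.eq_of_length hp.length_eq.symm).symm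
  | case3 x xs y ys ih1 ih2 =>
      rw [shuffles]
      have hxy : x ≠ y := by
        simp only [List.cons_append, List.nodup_cons, List.mem_append, List.mem_cons] at h
        tauto
      have h1 : (xs ++ y :: ys).Nodup := h.sublist ((List.sublist_cons_self x xs).append_right _)
      have h2 : ((x :: xs) ++ ys).Nodup :=
        h.sublist ((List.sublist_cons_self y ys).append_left (x :: xs))
      obtain ⟨n1, m1⟩ := ih1 h1
      obtain ⟨n2, m2⟩ := ih2 h2
      constructor
      · rw [Multiset.nodup_add]
        refine ⟨n1.map List.cons_injective, n2.map List.cons_injective, ?_⟩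
        rw [Multiset.disjoint_left]
        intro w hw1 hw2
        simp only [Multiset.mem_map] at hw1 hw2
        obtain ⟨w1, -, rfl⟩ := hw1
        obtain ⟨w2, -, he⟩ := hw2
        exact hxy ((List.cons.injEq ..).mp he).1.symm
      · intro w
        simp only [Multiset.mem_add, Multiset.mem_map]
        constructor
        · rintro (⟨w', hw', rfl⟩ | ⟨w', hw', rfl⟩)
          · obtain ⟨hp, hsu, hsv⟩ := (m1 w').mp hw'
            exact ⟨hp.cons x, List.cons_sublist_cons.mpr hsu, hsv.cons x⟩
          · obtain ⟨hp, hsu, hsv⟩ := (m2 w').mp hw'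
            exact ⟨(hp.cons y).trans List.perm_middle.symm, hsu.cons y,
              List.cons_sublist_cons.mpr hsv⟩
        · rintro ⟨hp, hsu, hsv⟩
          obtain ⟨c, w', rfl⟩ : ∃ c w', w = c :: w' := by
            cases w with
            | nil => exact absurd hp.length_eq (by simp)
            | cons c w' => exact ⟨c, w', rfl⟩
          have hcxy : c = x ∨ c = y := by
            by_contra hc
            push_neg at hc
            have hu' : (x :: xs).Sublist w' := by
              cases hsu with
              | cons _ h => exact h
              | cons_cons => exact absurd rfl hc.1
            have hv' : (y :: ys).Sublist w' := by
              cases hsv with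
              | cons _ h => exact h
              | cons_cons => exact absurd rfl hc.2
            have hcin : c ∈ (x :: xs) ++ y :: ys := hp.mem_iff.mp ((List.mem_cons_self (a := c) (l := w')))
            have hle1 : List.count c ((x :: xs) ++ y :: ys) ≤ 1 :=
              List.nodup_iff_count_le_one.mp h c
            have h2le : 2 ≤ List.count c (c :: w') := by
              rw [List.count_cons_self]
              have h1le : 1 ≤ List.count c w' := by
                rcases List.mem_append.mp hcin with hcu | hcv
                · exact le_trans (List.count_pos_iff.mpr hcu) (hu'.count_le c)
                · exact le_trans (List.count_pos_iff.mpr hcv) (hv'.count_le c)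
              omega
            rw [hp.count_eq c] at h2le
            omega
          rcases hcxy with rfl | rfl
          · left
            refine ⟨w', (m1 w').mpr ⟨?_, ?_, ?_⟩, rfl⟩
            · exact (hp.trans (by rw [List.cons_append])).cons_inv
            · exact List.cons_sublist_cons.mp hsu
            · cases hsv with
              | cons _ h => exact h
              | cons_cons => exact absurd rfl hxy.symm
          · right
            refine ⟨w', (m2 w').mpr ⟨?_, ?_, ?_⟩, rfl⟩
            · exact (hp.trans (List.perm_middle (a := c) (l₁ := x :: xs) (l₂ := ys))).cons_inv
            · cases hsu with
              | cons _ h => exact h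
              | cons_cons => exact absurd rfl hxy
            · exact List.cons_sublist_cons.mp hsv


/-- The block `[(a,false),(a,true)]`. -/
def blk (a : α) : List (α × Bool) := [(a, false), (a, true)]

/-- Admissible interleavings of the blocks indexed by `l`. -/
def Adm (l : List α) (w : List (α × Bool)) : Prop :=
  w.Perm (l.flatMap blk) ∧ ∀ a ∈ l, (blk a).Sublist w

lemma nodup_flatMap_blk {l : List α} (hl : l.Nodup) : (l.flatMap blk).Nodup := by
  induction l with
  | nil => simp
  | cons a l ih =>
      rw [List.flatMap_cons]
      have hni := ih (List.nodup_cons.mp hl).2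
      have ha : a ∉ l := (List.nodup_cons.mp hl).1
      simp only [List.nodup_append', blk]
      refine ⟨by simp, hni, ?_⟩
      intro p hp hp2
      obtain ⟨b, hb, hpb⟩ := List.mem_flatMap.mp hp2
      simp only [blk, List.mem_cons, List.mem_singleton, List.not_mem_nil, or_false] at hp hpb
      rcases hp with rfl | rfl <;> rcases hpb with h | h <;>
        (injection h with h1 h2; subst h1; exact ha hb)

lemma Adm.nodup {l : List α} {w : List (α × Bool)} (hl : l.Nodup) (h : Adm l w) :
    w.Nodup := h.1.nodup_iff.mpr (nodup_flatMap_blk hl)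

lemma Adm.fst_mem {l : List α} {w : List (α × Bool)} (h : Adm l w) {p : α × Bool}
    (hp : p ∈ w) : p.1 ∈ l := by
  obtain ⟨b, hb, hpb⟩ := List.mem_flatMap.mp (h.1.mem_iff.mp hp)
  simp only [blk, List.mem_cons, List.mem_singleton, List.not_mem_nil, or_false] at hpb
  rcases hpb with rfl | rfl <;> exact hb

/-- the complementary word: `w` with block `a` removed -/
lemma filter_of_interleave [DecidableEq α] {l : List α} {a : α} {w' w : List (α × Bool)}
    (ha : a ∉ l) (h' : Adm l w') (hperm : w.Perm (blk a ++ w')) (hsub : w'.Sublist w) :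
    w.filter (fun p => p.1 ≠ a) = w' := by
  have hw'filt : w'.filter (fun p => p.1 ≠ a) = w' := by
    rw [List.filter_eq_self]
    intro p hp
    have := h'.fst_mem hp
    simp only [ne_eq, decide_eq_true_eq]
    rintro rfl; exact ha this
  have hsub2 : w'.Sublist (w.filter (fun p => p.1 ≠ a)) := by
    have := hsub.filter (fun p => p.1 ≠ a)
    rwa [hw'filt] at this
  have hperm2 : (w.filter (fun p => p.1 ≠ a)).Perm w' := by
    have := hperm.filter (fun p => p.1 ≠ a)
    rwa [List.filter_append, show (blk a).filter (fun p => p.1 ≠ a) = [] by simp [blk],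
      List.nil_append, hw'filt] at this
  exact (hsub2.eq_of_length hperm2.length_eq.symm).symm

lemma mshuffleList_spec [DecidableEq α] (l : List α) (hl : l.Nodup) :
    (mshuffleList (l.map blk)).Nodup ∧
      ∀ w, w ∈ mshuffleList (l.map blk) ↔ Adm l w := by
  induction l with
  | nil =>
      constructor
      · simp [mshuffleList]
      · intro w
        simp only [List.map_nil, mshuffleList, Multiset.mem_singleton, Adm, List.flatMap_nil]
        constructor
        · rintro rfl; exact ⟨List.Perm.refl _, by simp⟩
        · rintro ⟨hp, -⟩; exact hp.eq_nil
  | cons a l ih =>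
      have hal : a ∉ l := (List.nodup_cons.mp hl).1
      have hl' : l.Nodup := (List.nodup_cons.mp hl).2
      obtain ⟨hnd, hmem⟩ := ih hl'
      have hkey : ∀ w' ∈ mshuffleList (l.map blk),
          (shuffles (blk a) w').Nodup ∧
          ∀ w, w ∈ shuffles (blk a) w' ↔
            (w.Perm (blk a ++ w') ∧ (blk a).Sublist w ∧ w'.Sublist w) := by
        intro w' hw'
        have hadm := (hmem w').mp hw'
        apply shuffles_spec
        rw [List.nodup_append']
        refine ⟨by simp [blk], hadm.nodup hl', ?_⟩
        intro p hp hp2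
        have := hadm.fst_mem hp2
        simp only [blk, List.mem_cons, List.mem_singleton, List.not_mem_nil, or_false] at hp
        rcases hp with rfl | rfl <;> exact hal this
      have hstep : mshuffleList ((a :: l).map blk)
          = (mshuffleList (l.map blk)).bind (shuffles (blk a)) := by
        rw [List.map_cons, mshuffleList]
      constructor
      · rw [hstep, Multiset.nodup_bind]
        refine ⟨fun w' hw' => (hkey w' hw').1, Multiset.Nodup.pairwise ?_ hnd⟩
        intro w₁ h₁ w₂ h₂ hne
        rw [Function.onFun, Multiset.disjoint_left]
        intro w hw1 hw2
        obtain ⟨hp1, -, hs1⟩ := ((hkey w₁ h₁).2 w).mp hw1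
        obtain ⟨hp2, -, hs2⟩ := ((hkey w₂ h₂).2 w).mp hw2
        have e1 := filter_of_interleave hal ((hmem w₁).mp h₁) hp1 hs1
        have e2 := filter_of_interleave hal ((hmem w₂).mp h₂) hp2 hs2
        exact hne (e1 ▸ e2)
      · intro w
        rw [hstep, Multiset.mem_bind]
        constructor
        · rintro ⟨w', hw', hw⟩
          obtain ⟨hp, hba, hsw⟩ := ((hkey w' hw').2 w).mp hw
          have hadm' := (hmem w').mp hw'
          constructor
          · refine hp.trans ?_
            rw [List.flatMap_cons]
            exact hadm'.1.append_left (blk a)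
          · intro b hb
            rcases List.mem_cons.mp hb with rfl | hb'
            · exact hba
            · exact (hadm'.2 b hb').trans hsw
        · rintro ⟨hp, hblocks⟩
          set w' := w.filter (fun p => p.1 ≠ a) with hw'def
          have hJ : (l.flatMap blk).filter (fun p => p.1 ≠ a) = l.flatMap blk := by
            rw [List.filter_eq_self]
            intro p hp'
            obtain ⟨b, hb, hpb⟩ := List.mem_flatMap.mp hp'
            simp only [blk, List.mem_cons, List.mem_singleton, List.not_mem_nil, or_false] at hpb
            have hba : b ≠ a := fun h => hal (h ▸ hb)
            rcases hpb with rfl | rfl <;> simpa using hba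
          have hw'perm : w'.Perm (l.flatMap blk) := by
            have := hp.filter (fun p => p.1 ≠ a)
            rwa [List.flatMap_cons, List.filter_append,
              show (blk a).filter (fun p => p.1 ≠ a) = [] by simp [blk],
              List.nil_append, hJ] at this
          have hadm' : Adm l w' := by
            refine ⟨hw'perm, fun b hb => ?_⟩
            have hba : b ≠ a := fun h => hal (h ▸ hb)
            have := (hblocks b (List.mem_cons_of_mem a hb)).filter (fun p => p.1 ≠ a)
            rwa [show (blk b).filter (fun p => p.1 ≠ a) = blk b by simp [blk, hba]] at this
          refine ⟨w', (hmem w').mpr hadm', ?_⟩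
          rw [(hkey w' ((hmem w').mpr hadm')).2 w]
          refine ⟨?_, hblocks a (List.mem_cons_self), (List.filter_sublist (l := w))⟩
          refine hp.trans ?_
          rw [List.flatMap_cons]
          exact (hw'perm.symm.append_left (blk a))


/-- Is the word a concatenation of blocks `(a,false)(a,true)`? -/
def chain [DecidableEq α] : List (α × Bool) → Bool
  | [] => true
  | (a, false) :: (b, true) :: r => decide (a = b) && chain r
  | (_, false) :: (_, false) :: _ => false
  | (_, true) :: _ => false
  | [(_, false)] => false

/-- Swap the two letters at the first "bad" spot. -/
def tw : List (α × Bool) → List (α × Bool)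
  | (a, false) :: (b, true) :: r => (a, false) :: (b, true) :: tw r
  | (a, false) :: (b, false) :: r => (b, false) :: (a, false) :: r
  | (a, true) :: r => (a, true) :: r
  | [(a, false)] => [(a, false)]
  | [] => []

/-- The pair of letters at the first "bad" spot. -/
def fp : List (α × Bool) → Option (α × α)
  | (_, false) :: (_, true) :: r => fp r
  | (a, false) :: (b, false) :: _ => some (a, b)
  | (_, true) :: _ => none
  | [(_, false)] => none
  | [] => none

/-- Reading a letter through a permutation of opening letters. -/
def ltr (f : α → α) (p : α × Bool) : α := if p.2 then p.1 else f p.1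

lemma fp_mem {w : List (α × Bool)} {a b : α} (h : fp w = some (a, b)) :
    (a, false) ∈ w ∧ (b, false) ∈ w := by
  induction w using fp.induct with
  | case1 x y r ih =>
      rw [fp] at h
      have := ih h
      exact ⟨List.mem_cons_of_mem _ (List.mem_cons_of_mem _ this.1),
        List.mem_cons_of_mem _ (List.mem_cons_of_mem _ this.2)⟩
  | case2 x y r =>
      rw [fp] at h
      obtain ⟨rfl, rfl⟩ : x = a ∧ y = b := by
        have := Option.some.inj h; exact ⟨congrArg Prod.fst this, congrArg Prod.snd this⟩
      exact ⟨List.mem_cons_self, List.mem_cons_of_mem _ (List.mem_cons_self)⟩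
  | case3 x r => rw [fp] at h; exact absurd h (by simp)
  | case4 x => rw [fp] at h; exact absurd h (by simp)
  | case5 => rw [fp] at h; exact absurd h (by simp)

lemma map_ltr_tw [DecidableEq α] (f : α → α) {w : List (α × Bool)} {a b : α}
    (hnd : w.Nodup) (hfp : fp w = some (a, b)) :
    (tw w).map (ltr (f ∘ Equiv.swap a b)) = w.map (ltr f) := by
  induction w using fp.induct with
  | case1 x y r ih =>
      rw [fp] at hfp
      obtain ⟨hmem1, hmem2⟩ := fp_mem hfp
      have hx : (x, false) ∉ (y, true) :: r := (List.nodup_cons.mp hnd).1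
      have hxa : x ≠ a := fun h => hx (h ▸ List.mem_cons_of_mem _ hmem1)
      have hxb : x ≠ b := fun h => hx (h ▸ List.mem_cons_of_mem _ hmem2)
      have hndr : r.Nodup := (List.nodup_cons.mp (List.nodup_cons.mp hnd).2).2
      rw [tw]
      simp only [List.map_cons, ih hndr hfp]
      simp [ltr, Equiv.swap_apply_of_ne_of_ne hxa hxb]
  | case2 x y r =>
      rw [fp] at hfp
      obtain ⟨rfl, rfl⟩ : x = a ∧ y = b := by
        have := Option.some.inj hfp; exact ⟨congrArg Prod.fst this, congrArg Prod.snd this⟩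
      rw [tw]
      simp only [List.map_cons]
      have hx : (x, false) ∉ (y, false) :: r := (List.nodup_cons.mp hnd).1
      have hxr : (x, false) ∉ r := fun h => hx (List.mem_cons_of_mem _ h)
      have hyr : (y, false) ∉ r := (List.nodup_cons.mp (List.nodup_cons.mp hnd).2).1
      congr 1
      · simp [ltr, Equiv.swap_apply_right]
      congr 1
      · simp [ltr, Equiv.swap_apply_left]
      apply List.map_congr_left
      rintro ⟨k, bb⟩ hk
      cases bb
      · have hka : k ≠ x := fun h => hxr (h ▸ hk)
        have hkb : k ≠ y := fun h => hyr (h ▸ hk)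
        simp [ltr, Equiv.swap_apply_of_ne_of_ne hka hkb]
      · simp [ltr]
  | case3 x r => rw [fp] at hfp; exact absurd hfp (by simp)
  | case4 x => rw [fp] at hfp; exact absurd hfp (by simp)
  | case5 => rw [fp] at hfp; exact absurd hfp (by simp)


lemma cons_sublist_cases {β : Type*} {x y : β} {s t : List β} (h : (x :: s).Sublist (y :: t)) :
    (x = y ∧ s.Sublist t) ∨ (x :: s).Sublist t := by
  cases h with
  | cons _ h => exact Or.inr h
  | cons_cons => exact Or.inl ⟨rfl, by assumption⟩

lemma sublist_of_ne {β : Type*} {x y : β} {s t : List β} (h : (x :: s).Sublist (y :: t))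
    (hxy : x ≠ y) : (x :: s).Sublist t := by
  rcases cons_sublist_cases h with ⟨he, -⟩ | h2
  · exact absurd he hxy
  · exact h2

lemma adm_head {l : List α} {w : List (α × Bool)} (hl : l.Nodup) (hadm : Adm l w)
    (hne : l ≠ []) : ∃ a rest, a ∈ l ∧ w = (a, false) :: rest := by
  obtain ⟨a, l', rfl⟩ : ∃ a l', l = a :: l' := by
    cases l with
    | nil => exact absurd rfl hne
    | cons a l' => exact ⟨a, l', rfl⟩
  cases w with
  | nil =>
      have := (hadm.2 a (List.mem_cons_self)).length_le
      simp [blk] at this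
  | cons p rest =>
      obtain ⟨c, bb⟩ := p
      have hcl : c ∈ a :: l' := hadm.fst_mem (List.mem_cons_self)
      cases bb with
      | false => exact ⟨c, rest, hcl, rfl⟩
      | true =>
          exfalso
          have hblk := hadm.2 c hcl
          have hnd := hadm.nodup hl
          rcases cons_sublist_cases hblk with ⟨heq, -⟩ | h2
          · exact absurd (congrArg Prod.snd heq) (by simp)
          · have : (c, true) ∈ rest := h2.subset (by simp [blk])
            exact (List.nodup_cons.mp hnd).1 this

lemma adm_block_cons [DecidableEq α] {l : List α} {a : α} {r : List (α × Bool)} (hl : l.Nodup)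
    (hadm : Adm l ((a, false) :: (a, true) :: r)) : a ∈ l ∧ Adm (l.erase a) r := by
  have ha : a ∈ l := hadm.fst_mem (List.mem_cons_self)
  refine ⟨ha, ?_, ?_⟩
  · have hperm := hadm.1.trans ((List.perm_cons_erase ha).flatMap_right blk)
    rw [List.flatMap_cons] at hperm
    simp only [blk, List.cons_append, List.nil_append] at hperm
    exact hperm.cons_inv.cons_inv
  · intro b hb
    have hbne : b ≠ a := ((List.Nodup.mem_erase_iff hl).mp hb).1
    have hbl : b ∈ l := ((List.Nodup.mem_erase_iff hl).mp hb).2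
    have h1 := sublist_of_ne (hadm.2 b hbl) (by simp [hbne])
    exact sublist_of_ne h1 (by simp)

lemma adm_block_build [DecidableEq α] {l : List α} {a : α} {r : List (α × Bool)}
    (ha : a ∈ l) (hadm : Adm (l.erase a) r) : Adm l ((a, false) :: (a, true) :: r) := by
  constructor
  · show (blk a ++ r).Perm _
    refine (hadm.1.append_left (blk a)).trans ?_
    have := (List.perm_cons_erase ha).flatMap_right blk
    rw [List.flatMap_cons] at this
    exact this.symm
  · intro b hb
    by_cases hba : b = a
    · subst hba
      exact List.sublist_append_left (blk b) r
    · have hb' : b ∈ l.erase a := (List.mem_erase_of_ne hba).mpr hb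
      exact (hadm.2 b hb').trans (List.sublist_append_right (blk a) r)

lemma adm_swap {l : List α} {a b : α} {r : List (α × Bool)} (hl : l.Nodup)
    (hadm : Adm l ((a, false) :: (b, false) :: r)) :
    a ≠ b ∧ Adm l ((b, false) :: (a, false) :: r) := by
  have hnd := hadm.nodup hl
  have hab : a ≠ b := by
    intro h; subst h
    exact (List.nodup_cons.mp hnd).1 (List.mem_cons_self)
  refine ⟨hab, (List.Perm.swap _ _ _).trans hadm.1, ?_⟩
  intro c hc
  have h := hadm.2 c hc
  rcases cons_sublist_cases h with ⟨heq, hrest⟩ | h2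
  · have hca : c = a := congrArg Prod.fst heq
    subst hca
    have h1 : [(c, true)].Sublist r := sublist_of_ne hrest (by simp)
    exact ((h1.cons₂ (c, false)).cons (b, false))
  · rcases cons_sublist_cases h2 with ⟨heq, hrest⟩ | h3
    · have hcb : c = b := congrArg Prod.fst heq
      subst hcb
      exact List.Sublist.cons₂ (c, false) (hrest.cons (a, false))
    · exact (h3.cons (a, false)).cons (b, false)

lemma bad_struct [DecidableEq α] :
    ∀ (n : ℕ) (l : List α) (w : List (α × Bool)), l.length ≤ n → l.Nodup → Adm l w →
      chain w = false →
      ∃ a b, fp w = some (a, b) ∧ a ≠ b ∧ Adm l (tw w) ∧ chain (tw w) = false ∧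
        fp (tw w) = some (b, a) ∧ tw (tw w) = w := by
  intro n
  induction n with
  | zero =>
      intro l w hlen hl hadm hbad
      obtain rfl : l = [] := List.length_eq_zero_iff.mp (Nat.le_zero.mp hlen)
      have hw : w = [] := by
        have := hadm.1
        simp only [List.flatMap_nil] at this
        exact this.eq_nil
      subst hw
      simp [chain] at hbad
  | succ n ih =>
      intro l w hlen hl hadm hbad
      have hlne : l ≠ [] := by
        rintro rfl
        have hw : w = [] := by
          have := hadm.1
          simp only [List.flatMap_nil] at this
          exact this.eq_nil
        subst hw
        simp [chain] at hbad
      obtain ⟨a₀, rest, ha₀, rfl⟩ := adm_head hl hadm hlne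
      cases rest with
      | nil =>
          have := (hadm.2 a₀ ha₀).length_le
          simp [blk] at this
      | cons p r =>
          obtain ⟨c, bb⟩ := p
          cases bb with
          | true =>
              have hceq : c = a₀ := by
                have hcl : c ∈ l :=
                  hadm.fst_mem (List.mem_cons_of_mem _ (List.mem_cons_self))
                have hblk := hadm.2 c hcl
                rcases cons_sublist_cases hblk with ⟨heq, -⟩ | h2
                · exact congrArg Prod.fst heq
                · rcases cons_sublist_cases h2 with ⟨heq, -⟩ | h3
                  · exact absurd (congrArg Prod.snd heq) (by simp)
                  · exfalso
                    have hmem : (c, true) ∈ r := h3.subset (by simp [blk])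
                    have hnd := hadm.nodup hl
                    exact (List.nodup_cons.mp (List.nodup_cons.mp hnd).2).1 hmem
              subst hceq
              obtain ⟨hmem, hadm'⟩ := adm_block_cons hl hadm
              have hbad' : chain r = false := by simpa [chain] using hbad
              have hlen' : (l.erase c).length ≤ n := by
                have h1 := List.length_erase_of_mem hmem
                have h2 := List.length_pos_iff.mpr hlne
                omega
              obtain ⟨a, b, h1, h2, h3, h4, h5, h6⟩ :=
                ih (l.erase c) r hlen' (hl.erase _) hadm' hbad'
              refine ⟨a, b, ?_, h2, ?_, ?_, ?_, ?_⟩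
              · rw [fp]; exact h1
              · rw [tw]; exact adm_block_build hmem h3
              · rw [tw]; simpa [chain] using h4
              · rw [tw, fp]; exact h5
              · simp only [tw, h6]
          | false =>
              obtain ⟨hab, hadm'⟩ := adm_swap hl hadm
              refine ⟨a₀, c, by rw [fp], hab, ?_, ?_, ?_, ?_⟩
              · rw [tw]; exact hadm'
              · rw [tw, chain]
              · rw [tw, fp]
              · rw [tw, tw]


lemma chain_flatMap [DecidableEq α] (l' : List α) : chain (l'.flatMap blk) = true := by
  induction l' with
  | nil => rw [List.flatMap_nil, chain]
  | cons a t ih =>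
      rw [List.flatMap_cons]
      show chain ((a, false) :: (a, true) :: t.flatMap blk) = true
      rw [chain]
      simp [ih]

lemma blk_sublist_flatMap {a : α} {l' : List α} (ha : a ∈ l') :
    (blk a).Sublist (l'.flatMap blk) := by
  induction l' with
  | nil => simp at ha
  | cons b t ih =>
      rw [List.flatMap_cons]
      rcases List.mem_cons.mp ha with rfl | ha'
      · exact List.sublist_append_left _ _
      · exact (ih ha').trans (List.sublist_append_right _ _)

lemma adm_flatMap {l l' : List α} (hp : l'.Perm l) : Adm l (l'.flatMap blk) :=
  ⟨hp.flatMap_right blk, fun a ha => blk_sublist_flatMap (hp.mem_iff.mpr ha)⟩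

lemma flatMap_blk_inj : ∀ {l₁ l₂ : List α}, l₁.flatMap blk = l₂.flatMap blk → l₁ = l₂
  | [], [] => fun _ => rfl
  | [], b :: t₂ => by simp [blk]
  | a :: t₁, [] => by simp [blk]
  | a :: t₁, b :: t₂ => by
      rw [List.flatMap_cons, List.flatMap_cons]
      intro h
      simp only [blk, List.cons_append, List.nil_append, List.cons.injEq, Prod.mk.injEq] at h
      obtain ⟨⟨rfl, -⟩, -, h3⟩ := h
      rw [flatMap_blk_inj h3]

lemma good_struct [DecidableEq α] :
    ∀ (n : ℕ) (l : List α) (w : List (α × Bool)), l.length ≤ n → l.Nodup → Adm l w →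
      chain w = true → ∃ l' : List α, l'.Perm l ∧ w = l'.flatMap blk := by
  intro n
  induction n with
  | zero =>
      intro l w hlen hl hadm _
      obtain rfl : l = [] := List.length_eq_zero_iff.mp (Nat.le_zero.mp hlen)
      have hw : w = [] := by
        have := hadm.1
        simp only [List.flatMap_nil] at this
        exact this.eq_nil
      exact ⟨[], List.Perm.refl _, by simp [hw]⟩
  | succ n ih =>
      intro l w hlen hl hadm hgood
      rcases eq_or_ne l [] with rfl | hlne
      · have hw : w = [] := by
          have := hadm.1
          simp only [List.flatMap_nil] at this
          exact this.eq_nil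
        exact ⟨[], List.Perm.refl _, by simp [hw]⟩
      obtain ⟨a₀, rest, ha₀, rfl⟩ := adm_head hl hadm hlne
      cases rest with
      | nil => rw [chain] at hgood; exact absurd hgood (by simp)
      | cons p r =>
          obtain ⟨c, bb⟩ := p
          cases bb with
          | false => rw [chain] at hgood; exact absurd hgood (by simp)
          | true =>
              rw [chain] at hgood
              obtain ⟨hac, hchain⟩ := Bool.and_eq_true_iff.mp hgood
              have hac' : a₀ = c := of_decide_eq_true hac
              subst hac'
              obtain ⟨hmem, hadm'⟩ := adm_block_cons hl hadm
              have hlen' : (l.erase a₀).length ≤ n := by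
                have h1 := List.length_erase_of_mem hmem
                have h2 := List.length_pos_iff.mpr hlne
                omega
              obtain ⟨l'', hperm, rfl⟩ := ih (l.erase a₀) r hlen' (hl.erase _) hadm' hchain
              refine ⟨a₀ :: l'', ?_, by rw [List.flatMap_cons]; rfl⟩
              exact (hperm.cons a₀).trans (List.perm_cons_erase hmem).symm


lemma shuffles_map {β : Type*} (f : α → β) (u v : List α) :
    shuffles (u.map f) (v.map f) = (shuffles u v).map (List.map f) := by
  induction u, v using shuffles.induct with
  | case1 ys => simp [shuffles_nil_left]
  | case2 x xs => simp [shuffles_nil_right]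
  | case3 x xs y ys ih1 ih2 =>
      rw [List.map_cons, List.map_cons, shuffles, shuffles,
        ← List.map_cons (f := f) (a := y) (l := ys), ← List.map_cons (f := f) (a := x) (l := xs), ih1, ih2]
      simp only [Multiset.map_add, Multiset.map_map, Function.comp]
      simp [List.map_cons]

lemma mshuffleList_map {β : Type*} (f : α → β) (L : List (List α)) :
    mshuffleList (L.map (List.map f)) = (mshuffleList L).map (List.map f) := by
  induction L with
  | nil => simp [mshuffleList]
  | cons u L ih =>
      rw [List.map_cons, mshuffleList, mshuffleList, ih, Multiset.bind_map,
        Multiset.map_bind]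
      simp only [shuffles_map f]

/-- The involution on (word, permutation) pairs. -/
noncomputable def gfun [DecidableEq α] (p : List (α × Bool) × Equiv.Perm α) :
    List (α × Bool) × Equiv.Perm α :=
  match fp p.1 with
  | some (a, b) => (tw p.1, p.2 * Equiv.swap a b)
  | none => p

lemma gfun_eq [DecidableEq α] {p : List (α × Bool) × Equiv.Perm α} {a b : α}
    (h : fp p.1 = some (a, b)) : gfun p = (tw p.1, p.2 * Equiv.swap a b) := by
  simp [gfun, h]

end ShufflePaper

namespace ShufflePaper

theorem shuffle_det_W_eq_block_sum' (d : ℕ) (hd : 1 ≤ d) :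
    detSh (W d) =
      ∑ σ : Equiv.Perm (Fin d), (Equiv.Perm.sign σ : ℤ) •
        ∑ τ : Equiv.Perm (Fin d),
          Finsupp.single ((List.finRange d).flatMap fun i => [τ i, σ (τ i)])
            (1 : ℝ) := by
  classical
  have hl : (List.finRange d).Nodup := List.nodup_finRange d
  obtain ⟨hnd, hmem⟩ := mshuffleList_spec (List.finRange d) hl
  set F : Finset (List (Fin d × Bool)) := ⟨mshuffleList ((List.finRange d).map blk), hnd⟩
    with hFdef
  have hFmem : ∀ w, w ∈ F ↔ Adm (List.finRange d) w := fun w => hmem w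
  -- Step A : each signed shuffle product is a sum over admissible words
  have stepA : ∀ σ : Equiv.Perm (Fin d),
      shProd ((List.finRange d).map fun i => W d (σ i) i) =
        ∑ w ∈ F, Finsupp.single (w.map (ltr ⇑σ)) (1 : ℝ) := by
    intro σ
    have h1 : ((List.finRange d).map fun i => W d (σ i) i)
        = (((List.finRange d).map blk).map (List.map (ltr ⇑σ))).map
            fun w => Finsupp.single w (1 : ℝ) := by
      rw [List.map_map, List.map_map]
      apply List.map_congr_left
      intro i _
      simp [W, Function.comp, blk, ltr]
    rw [h1, shProd_singles, mshuffleList_map, ofMS, Multiset.map_map,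
      Finset.sum_eq_multiset_sum]
    rfl
  -- Step B : swap the two sums
  have stepB : detSh (W d) = ∑ w ∈ F, ∑ σ : Equiv.Perm (Fin d),
      (Equiv.Perm.sign σ : ℤ) • Finsupp.single (w.map (ltr ⇑σ)) (1 : ℝ) := by
    rw [detSh]
    rw [Finset.sum_congr rfl fun σ _ => by rw [stepA σ, Finset.smul_sum]]
    exact Finset.sum_comm
  rw [stepB, ← Finset.sum_filter_add_sum_filter_not F (fun w => chain w = true)]
  -- Step C : the non-chain part vanishes by a sign-reversing involution
  have badzero : ∑ w ∈ F.filter (fun w => ¬ chain w = true),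
      ∑ σ : Equiv.Perm (Fin d),
        (Equiv.Perm.sign σ : ℤ) • Finsupp.single (w.map (ltr ⇑σ)) (1 : ℝ) = 0 := by
    rw [← Finset.sum_product (f := fun p : List (Fin d × Bool) × Equiv.Perm (Fin d) =>
      (Equiv.Perm.sign p.2 : ℤ) • Finsupp.single (p.1.map (ltr ⇑p.2)) (1 : ℝ))]
    have key : ∀ p : List (Fin d × Bool) × Equiv.Perm (Fin d),
        p ∈ (F.filter (fun w => ¬ chain w = true)) ×ˢ Finset.univ →
        ∃ a b : Fin d, fp p.1 = some (a, b) ∧ a ≠ b ∧ Adm (List.finRange d) (tw p.1) ∧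
          chain (tw p.1) = false ∧ fp (tw p.1) = some (b, a) ∧ tw (tw p.1) = p.1 ∧
          p.1.Nodup := by
      intro p hp
      obtain ⟨hp1, -⟩ := Finset.mem_product.mp hp
      obtain ⟨hwF, hbadp⟩ := Finset.mem_filter.mp hp1
      have hadm : Adm (List.finRange d) p.1 := (hFmem p.1).mp hwF
      have hbad : chain p.1 = false := by
        revert hbadp; cases chain p.1 <;> simp
      obtain ⟨a, b, h1, h2, h3, h4, h5, h6⟩ :=
        bad_struct (List.finRange d).length (List.finRange d) p.1 le_rfl hl hadm hbad
      exact ⟨a, b, h1, h2, h3, h4, h5, h6, hadm.nodup hl⟩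
    refine Finset.sum_involution (fun p _ => gfun p) ?_ ?_ ?_ ?_
    · intro p hp
      obtain ⟨a, b, h1, h2, h3, h4, h5, h6, hnd'⟩ := key p hp
      simp only [gfun_eq h1]
      have hmap : (tw p.1).map (ltr ⇑(p.2 * Equiv.swap a b)) = p.1.map (ltr ⇑p.2) := by
        rw [Equiv.Perm.coe_mul]
        exact map_ltr_tw (⇑p.2) hnd' h1
      have hsgn : ((Equiv.Perm.sign (p.2 * Equiv.swap a b) : ℤ))
          = -(Equiv.Perm.sign p.2 : ℤ) := by
        rw [Equiv.Perm.sign_mul, Equiv.Perm.sign_swap h2]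
        simp
      rw [hmap, hsgn, neg_smul]
      exact add_neg_cancel _
    · intro p hp _
      obtain ⟨a, b, h1, h2, -⟩ := key p hp
      simp only [gfun_eq h1]
      intro he
      have := congrArg Prod.snd he
      simp only at this
      have hswap : Equiv.swap a b = 1 :=
        mul_left_cancel (a := p.2) (by rw [mul_one]; exact this)
      exact h2 (Equiv.swap_eq_one_iff.mp hswap)
    · intro p hp
      obtain ⟨a, b, h1, h2, h3, h4, -⟩ := key p hp
      simp only [gfun_eq h1]
      refine Finset.mem_product.mpr ⟨Finset.mem_filter.mpr ⟨(hFmem _).mpr h3, ?_⟩,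
        Finset.mem_univ _⟩
      simp [h4]
    · intro p hp
      obtain ⟨a, b, h1, h2, h3, h4, h5, h6, -⟩ := key p hp
      simp only [gfun_eq h1]
      simp only [gfun_eq (p := (tw p.1, p.2 * Equiv.swap a b)) h5]
      rw [h6, Equiv.swap_comm b a, mul_assoc, Equiv.swap_mul_self, mul_one]
  rw [badzero, add_zero]
  -- Step D : the chain part is indexed by permutations
  have good_eq : ∀ σ : Equiv.Perm (Fin d),
      ∑ τ : Equiv.Perm (Fin d),
          Finsupp.single ((List.finRange d).flatMap fun k => [σ (τ k), τ k]) (1 : ℝ)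
        = ∑ w ∈ F.filter (fun w => chain w = true),
            Finsupp.single (w.map (ltr ⇑σ)) (1 : ℝ) := by
    intro σ
    refine Finset.sum_bij (fun τ _ => ((List.finRange d).map ⇑τ).flatMap blk)
      ?_ ?_ ?_ ?_
    · intro τ _
      have hperm : ((List.finRange d).map ⇑τ).Perm (List.finRange d) := by
        refine List.perm_of_nodup_nodup_toFinset_eq (hl.map τ.injective) hl ?_
        ext x
        simp only [List.mem_toFinset, List.mem_map, List.mem_finRange, true_and, iff_true]
        exact ⟨τ⁻¹ x, Equiv.apply_symm_apply τ x⟩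
      refine Finset.mem_filter.mpr ⟨(hFmem _).mpr (adm_flatMap hperm), chain_flatMap _⟩
    · intro τ₁ _ τ₂ _ he
      have := flatMap_blk_inj he
      apply Equiv.ext
      intro x
      exact List.map_inj_left.mp this x (List.mem_finRange x)
    · intro w hw
      obtain ⟨hwF, hchain⟩ := Finset.mem_filter.mp hw
      obtain ⟨l', hperm, rfl⟩ := good_struct (List.finRange d).length (List.finRange d)
        w le_rfl hl ((hFmem _).mp hwF) hchain
      have hlen : l'.length = d := by rw [hperm.length_eq, List.length_finRange]
      have hnd' : l'.Nodup := hperm.nodup_iff.mpr hl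
      have hinj : Function.Injective (fun k : Fin d => l'.get (Fin.cast hlen.symm k)) := by
        intro k₁ k₂ h
        have := (hnd'.get_inj_iff).mp h
        exact Fin.cast_injective hlen.symm this
      refine ⟨Equiv.ofBijective _ (Finite.injective_iff_bijective.mp hinj),
        Finset.mem_univ _, ?_⟩
      have hf : (List.finRange d).map
          ⇑(Equiv.ofBijective _ (Finite.injective_iff_bijective.mp hinj)) = l' := by
        apply List.ext_get
        · simp [hlen]
        · intro i h1 h2
          simp only [List.get_eq_getElem, List.getElem_map, List.getElem_finRange, Equiv.ofBijective_apply]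
          rfl
      simp only [hf]
    · intro τ _
      congr 1
      rw [List.map_flatMap, List.flatMap_map]
      simp [blk, ltr]
  rw [Finset.sum_comm]
  have step3 : ∀ σ : Equiv.Perm (Fin d),
      ∑ w ∈ F.filter (fun w => chain w = true),
        (Equiv.Perm.sign σ : ℤ) • Finsupp.single (w.map (ltr ⇑σ)) (1 : ℝ)
      = (Equiv.Perm.sign σ : ℤ) •
          ∑ τ : Equiv.Perm (Fin d),
            Finsupp.single ((List.finRange d).flatMap fun k => [σ (τ k), τ k]) (1 : ℝ) := by
    intro σ
    rw [← Finset.smul_sum, good_eq σ]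
  rw [Finset.sum_congr rfl fun σ _ => step3 σ]
  have inner : ∀ σ : Equiv.Perm (Fin d),
      ∑ τ : Equiv.Perm (Fin d),
          Finsupp.single ((List.finRange d).flatMap fun k => [σ (τ k), τ k]) (1 : ℝ)
        = ∑ τ : Equiv.Perm (Fin d),
          Finsupp.single ((List.finRange d).flatMap fun k => [τ k, σ⁻¹ (τ k)]) (1 : ℝ) := by
    intro σ
    rw [← Equiv.sum_comp (Equiv.mulLeft σ)
      (fun τ : Equiv.Perm (Fin d) =>
        Finsupp.single ((List.finRange d).flatMap fun k => [τ k, σ⁻¹ (τ k)]) (1 : ℝ))]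
    apply Finset.sum_congr rfl
    intro τ _
    congr 1
    simp [Equiv.Perm.mul_apply]
  rw [Finset.sum_congr rfl fun σ _ => by rw [inner σ]]
  rw [← Equiv.sum_comp (Equiv.inv (Equiv.Perm (Fin d)))
    (fun σ : Equiv.Perm (Fin d) => (Equiv.Perm.sign σ : ℤ) •
      ∑ τ : Equiv.Perm (Fin d),
        Finsupp.single ((List.finRange d).flatMap fun i => [τ i, σ (τ i)]) (1 : ℝ))]
  apply Finset.sum_congr rfl
  intro σ _
  simp [Equiv.inv_apply, Equiv.Perm.sign_inv]



/-- the shuffle determinant of `W_d` as a signed sum of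
concatenations of two-letter blocks `τ(i)σ(τ(i))`. -/
theorem shuffle_det_W_eq_block_sum (d : ℕ) (hd : 1 ≤ d) :
    detSh (W d) =
      ∑ σ : Equiv.Perm (Fin d), (Equiv.Perm.sign σ : ℤ) •
        ∑ τ : Equiv.Perm (Fin d),
          Finsupp.single ((List.finRange d).flatMap fun i => [τ i, σ (τ i)])
            (1 : ℝ) :=
  shuffle_det_W_eq_block_sum' d hd

end ShufflePaper
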